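/- Boundary limit of g. Let ξ be an ℕ-valued random variable with 0 < 𝔼(ξ) and 𝔼(ξ²) < ∞, with probability generating function f(s) = 𝔼(s^ξ), and set g(s) = 1/(1 − f(s)) − 1/(f'(1)(1 − s)) for s ∈ [0,1). Then lim_{s→1⁻} g(s) = f''(1)/(2 f'(1)²), where f'(1) = 𝔼(ξ) and f''(1) = 𝔼(ξ(ξ − 1)). -/

import Mathlib

open Filter Topology

private lemma sum_range_id_real (m : ℕ) :
    ∑ k ∈ Finset.range m, (k : ℝ) = m * (m - 1) / 2 := by
  induction m with
  | zero => simp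
  | succ n ih =>
      rw [Finset.sum_range_succ, ih]
      push_cast
      ring

theorem boundary_limit_of_g
    (p : ℕ → ℝ)
    (hp_nonneg : ∀ m, 0 ≤ p m)
    (hp_sum : ∑' m : ℕ, p m = 1)
    (hmean_summable : Summable (fun m : ℕ => (m : ℝ) * p m))
    (hsq_summable : Summable (fun m : ℕ => (m : ℝ) ^ 2 * p m))
    (hmean_pos : 0 < ∑' m : ℕ, (m : ℝ) * p m) :
    Tendsto
      (fun s : ℝ =>
        1 / (1 - ∑' m : ℕ, p m * s ^ m) -
          1 / ((∑' m : ℕ, (m : ℝ) * p m) * (1 - s)))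
      (nhdsWithin 1 (Set.Iio 1))
      (𝓝 ((∑' m : ℕ, (m : ℝ) * ((m : ℝ) - 1) * p m) /
        (2 * (∑' m : ℕ, (m : ℝ) * p m) ^ 2))) := by
  set μ : ℝ := ∑' m : ℕ, (m : ℝ) * p m with hμ
  set σ : ℝ := ∑' m : ℕ, (m : ℝ) * ((m : ℝ) - 1) * p m with hσ
  have hμne : μ ≠ 0 := ne_of_gt hmean_pos
  have hpsummable : Summable p := by
    by_contra h
    rw [tsum_eq_zero_of_not_summable h] at hp_sum
    norm_num at hp_sum
  -- A and B
  set A : ℝ → ℝ := fun s => ∑' m : ℕ, p m * ∑ k ∈ Finset.range m, s ^ k with hA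
  set B : ℝ → ℝ :=
    fun s => ∑' m : ℕ, p m * ∑ k ∈ Finset.range m, ∑ j ∈ Finset.range k, s ^ j with hB
  have hmem : Set.Ioo (0:ℝ) 1 ∈ nhdsWithin (1:ℝ) (Set.Iio 1) := by
    rw [mem_nhdsWithin]
    exact ⟨Set.Ioi 0, isOpen_Ioi, by norm_num, fun x hx => ⟨hx.1, hx.2⟩⟩
  -- bounds for s ∈ Ioo 0 1
  have hbA : ∀ᶠ s in nhdsWithin (1:ℝ) (Set.Iio 1),
      ∀ m : ℕ, ‖p m * ∑ k ∈ Finset.range m, s ^ k‖ ≤ (m : ℝ) * p m := by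
    filter_upwards [hmem] with s hs m
    rw [Real.norm_eq_abs, abs_mul, abs_of_nonneg (hp_nonneg m)]
    have h1 : |∑ k ∈ Finset.range m, s ^ k| ≤ (m : ℝ) := by
      refine (Finset.abs_sum_le_sum_abs _ _).trans ?_
      have : ∀ k ∈ Finset.range m, |s ^ k| ≤ 1 := by
        intro k _
        rw [abs_pow]
        exact pow_le_one₀ (abs_nonneg s) (abs_le.2 ⟨by linarith [hs.1], le_of_lt hs.2⟩)
      calc ∑ k ∈ Finset.range m, |s ^ k| ≤ ∑ k ∈ Finset.range m, 1 :=
            Finset.sum_le_sum this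
        _ = (m : ℝ) := by simp
    calc p m * |∑ k ∈ Finset.range m, s ^ k| ≤ p m * m :=
          mul_le_mul_of_nonneg_left h1 (hp_nonneg m)
      _ = (m : ℝ) * p m := mul_comm _ _
  have hbB : ∀ᶠ s in nhdsWithin (1:ℝ) (Set.Iio 1),
      ∀ m : ℕ, ‖p m * ∑ k ∈ Finset.range m, ∑ j ∈ Finset.range k, s ^ j‖ ≤
        (m : ℝ) ^ 2 * p m := by
    filter_upwards [hmem] with s hs m
    rw [Real.norm_eq_abs, abs_mul, abs_of_nonneg (hp_nonneg m)]
    have habs : |s| ≤ 1 := abs_le.2 ⟨by linarith [hs.1], le_of_lt hs.2⟩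
    have h1 : |∑ k ∈ Finset.range m, ∑ j ∈ Finset.range k, s ^ j| ≤ (m : ℝ) ^ 2 := by
      refine (Finset.abs_sum_le_sum_abs _ _).trans ?_
      have hk : ∀ k ∈ Finset.range m, |∑ j ∈ Finset.range k, s ^ j| ≤ (m : ℝ) := by
        intro k hk
        refine (Finset.abs_sum_le_sum_abs _ _).trans ?_
        calc ∑ j ∈ Finset.range k, |s ^ j| ≤ ∑ j ∈ Finset.range k, 1 := by
              refine Finset.sum_le_sum fun j _ => ?_
              rw [abs_pow]; exact pow_le_one₀ (abs_nonneg s) habs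
          _ = (k : ℝ) := by simp
          _ ≤ (m : ℝ) := by
              exact_mod_cast Nat.cast_le.2 (le_of_lt (Finset.mem_range.1 hk))
      calc ∑ k ∈ Finset.range m, |∑ j ∈ Finset.range k, s ^ j|
            ≤ ∑ k ∈ Finset.range m, (m : ℝ) := Finset.sum_le_sum hk
        _ = (m : ℝ) * m := by simp [mul_comm]
        _ = (m : ℝ) ^ 2 := by ring
    calc p m * |∑ k ∈ Finset.range m, ∑ j ∈ Finset.range k, s ^ j|
          ≤ p m * (m : ℝ) ^ 2 := mul_le_mul_of_nonneg_left h1 (hp_nonneg m)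
      _ = (m : ℝ) ^ 2 * p m := mul_comm _ _
  -- limits of A and B
  have hAlim : Tendsto A (nhdsWithin (1:ℝ) (Set.Iio 1)) (𝓝 μ) := by
    have := tendsto_tsum_of_dominated_convergence (𝓕 := nhdsWithin (1:ℝ) (Set.Iio 1))
      (f := fun s m => p m * ∑ k ∈ Finset.range m, s ^ k)
      (g := fun m => (m : ℝ) * p m) (bound := fun m => (m : ℝ) * p m)
      hmean_summable ?_ hbA
    · exact this
    · intro m
      have hc : Continuous (fun s : ℝ => p m * ∑ k ∈ Finset.range m, s ^ k) := by
        continuity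
      have := (hc.tendsto 1).mono_left (nhdsWithin_le_nhds (s := Set.Iio (1:ℝ)))
      simpa [mul_comm] using this
  have hBlim : Tendsto B (nhdsWithin (1:ℝ) (Set.Iio 1)) (𝓝 (σ / 2)) := by
    have hσ2 : (∑' m : ℕ, p m * ∑ k ∈ Finset.range m, (k : ℝ)) = σ / 2 := by
      rw [hσ]
      have : ∀ m : ℕ, p m * ∑ k ∈ Finset.range m, (k : ℝ) =
          ((m : ℝ) * ((m : ℝ) - 1) * p m) * (1/2) := by
        intro m; rw [sum_range_id_real]; ring
      rw [tsum_congr this, tsum_mul_right]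
      ring
    have := tendsto_tsum_of_dominated_convergence (𝓕 := nhdsWithin (1:ℝ) (Set.Iio 1))
      (f := fun s m => p m * ∑ k ∈ Finset.range m, ∑ j ∈ Finset.range k, s ^ j)
      (g := fun m => p m * ∑ k ∈ Finset.range m, (k : ℝ))
      (bound := fun m => (m : ℝ) ^ 2 * p m)
      hsq_summable ?_ hbB
    · rw [hσ2] at this; exact this
    · intro m
      have hc : Continuous
          (fun s : ℝ => p m * ∑ k ∈ Finset.range m, ∑ j ∈ Finset.range k, s ^ j) := by
        continuity
      have := (hc.tendsto 1).mono_left (nhdsWithin_le_nhds (s := Set.Iio (1:ℝ)))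
      simpa using this
  -- eventually A s > μ/2 > 0
  have hApos : ∀ᶠ s in nhdsWithin (1:ℝ) (Set.Iio 1), μ/2 < A s :=
    hAlim.eventually (eventually_gt_nhds (by linarith : μ/2 < μ))
  -- eventual equality of g with B/(A*μ)
  have heq : ∀ᶠ s in nhdsWithin (1:ℝ) (Set.Iio 1),
      1 / (1 - ∑' m : ℕ, p m * s ^ m) - 1 / (μ * (1 - s)) = B s / (A s * μ) := by
    filter_upwards [hmem, hApos, hbA, hbB] with s hs hApos hbA hbB
    have h1s : (1:ℝ) - s ≠ 0 := by have := hs.2; intro h; linarith [sub_eq_zero.1 h]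
    have hAne : A s ≠ 0 := ne_of_gt (lt_trans (by linarith : (0:ℝ) < μ/2) hApos)
    have hsA : Summable (fun m => p m * ∑ k ∈ Finset.range m, s ^ k) :=
      hmean_summable.of_norm_bounded hbA
    have hsB : Summable (fun m => p m * ∑ k ∈ Finset.range m, ∑ j ∈ Finset.range k, s ^ j) :=
      hsq_summable.of_norm_bounded hbB
    have hsf : Summable (fun m => p m * s ^ m) := by
      refine hpsummable.of_norm_bounded fun m => ?_
      rw [Real.norm_eq_abs, abs_mul, abs_of_nonneg (hp_nonneg m), abs_pow]
      have : |s| ≤ 1 := abs_le.2 ⟨by linarith [hs.1], le_of_lt hs.2⟩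
      calc p m * |s| ^ m ≤ p m * 1 :=
            mul_le_mul_of_nonneg_left (pow_le_one₀ (abs_nonneg s) this) (hp_nonneg m)
        _ = p m := mul_one _
    -- identity (i): 1 - f s = (1 - s) * A s
    have hi : 1 - (∑' m : ℕ, p m * s ^ m) = (1 - s) * A s := by
      nth_rewrite 1 [← hp_sum]
      rw [← Summable.tsum_sub hpsummable hsf]
      show _ = (1 - s) * ∑' m : ℕ, p m * ∑ k ∈ Finset.range m, s ^ k
      rw [← tsum_mul_left]
      refine tsum_congr fun m => ?_
      have hg : (1 - s) * ∑ k ∈ Finset.range m, s ^ k = 1 - s ^ m := by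
        linear_combination -(geom_sum_mul s m)
      calc p m - p m * s ^ m = p m * (1 - s ^ m) := by ring
        _ = p m * ((1 - s) * ∑ k ∈ Finset.range m, s ^ k) := by rw [hg]
        _ = (1 - s) * (p m * ∑ k ∈ Finset.range m, s ^ k) := by ring
    -- identity (ii): μ - A s = (1 - s) * B s
    have hμ' : μ = ∑' m : ℕ, p m * (m : ℝ) := by
      rw [hμ]; exact tsum_congr fun m => mul_comm _ _
    have hmean' : Summable (fun m : ℕ => p m * (m : ℝ)) := by
      refine hmean_summable.congr fun m => mul_comm _ _
    have hii : μ - A s = (1 - s) * B s := by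
      rw [hμ']
      show _ - (∑' m : ℕ, p m * ∑ k ∈ Finset.range m, s ^ k) =
        (1 - s) * ∑' m : ℕ, p m * ∑ k ∈ Finset.range m, ∑ j ∈ Finset.range k, s ^ j
      rw [← Summable.tsum_sub hmean' hsA, ← tsum_mul_left]
      refine tsum_congr fun m => ?_
      have hterm : (m : ℝ) - ∑ k ∈ Finset.range m, s ^ k =
          (1 - s) * ∑ k ∈ Finset.range m, ∑ j ∈ Finset.range k, s ^ j := by
        rw [Finset.mul_sum]
        have : ∀ k ∈ Finset.range m, (1 - s) * ∑ j ∈ Finset.range k, s ^ j = 1 - s ^ k := by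
          intro k _
          linear_combination -(geom_sum_mul s k)
        rw [Finset.sum_congr rfl this, Finset.sum_sub_distrib]
        simp
      calc p m * (m : ℝ) - p m * ∑ k ∈ Finset.range m, s ^ k
            = p m * ((m : ℝ) - ∑ k ∈ Finset.range m, s ^ k) := by ring
        _ = p m * ((1 - s) * ∑ k ∈ Finset.range m, ∑ j ∈ Finset.range k, s ^ j) := by
            rw [hterm]
        _ = (1 - s) * (p m * ∑ k ∈ Finset.range m, ∑ j ∈ Finset.range k, s ^ j) := by ring
    rw [hi]
    have hBval : B s = (μ - A s) / (1 - s) := by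
      rw [hii]; field_simp
    rw [hBval]
    field_simp
  -- combine
  have hgoal : Tendsto (fun s => B s / (A s * μ)) (nhdsWithin (1:ℝ) (Set.Iio 1))
      (𝓝 (σ / (2 * μ ^ 2))) := by
    have hden : Tendsto (fun s => A s * μ) (nhdsWithin (1:ℝ) (Set.Iio 1)) (𝓝 (μ * μ)) :=
      hAlim.mul_const μ
    have := hBlim.div hden (by positivity)
    have hval : σ / 2 / (μ * μ) = σ / (2 * μ ^ 2) := by
      rw [div_div, sq]
    rwa [hval] at this
  exact hgoal.congr' (heq.mono fun s h => h.symm)
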